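/- Let M be a t×n binary matrix that is d-runlength constrained, and suppose the map x ↦ M ⊙ x is injective on the set of binary vectors of Hamming weight exactly k. Then C(n, k) ≤ Σ_{i=0}^{⌊kt/(d+1)⌋} C(t, i), i.e., the number of k-subsets of [n] is at most the volume of the Hamming ball of radius kt/(d+1) in {0,1}^t. -/

import Mathlib

def RunLengthConstrained (t d : ℕ) (x : Fin t → Bool) : Prop :=
  ∀ i i' : Fin t, i < i' → x i = true → x i' = true →
    d ≤ (Finset.univ.filter (fun j : Fin t => i < j ∧ j < i' ∧ x j = false)).card

def orVec {t n : ℕ} (M : Fin t → Fin n → Bool) (x : Fin n → Bool) : Fin t → Bool :=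
  fun i => decide (∃ j, x j = true ∧ M i j = true)

lemma aux_div_ne {t d : ℕ} {x : Fin t → Bool} (hx : RunLengthConstrained t d x)
    {a b : Fin t} (hab : a < b) (ha : x a = true) (hb : x b = true) :
    a.val / (d + 1) ≠ b.val / (d + 1) := by
  intro hv
  have hd := hx a b hab ha hb
  have hsub : (Finset.univ.filter (fun j : Fin t => a < j ∧ j < b ∧ x j = false))
      ⊆ Finset.Ioo a b := by
    intro j hj
    simp only [Finset.mem_filter, Finset.mem_Ioo] at *
    exact ⟨hj.2.1, hj.2.2.1⟩
  have hcard := Finset.card_le_card hsub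
  rw [Fin.card_Ioo] at hcard
  have h1 : d ≤ (b : ℕ) - a - 1 := le_trans hd hcard
  have hab' : (a : ℕ) < b := hab
  have e1 := Nat.div_add_mod (a : ℕ) (d + 1)
  have e2 := Nat.div_add_mod (b : ℕ) (d + 1)
  have m1 := Nat.mod_lt (a : ℕ) (show 0 < d + 1 by omega)
  have m2 := Nat.mod_lt (b : ℕ) (show 0 < d + 1 by omega)
  have e3 : (d + 1) * ((a : ℕ) / (d + 1)) = (d + 1) * ((b : ℕ) / (d + 1)) := by rw [hv]
  omega

lemma aux_col_wt {t n d : ℕ} (hdvd : (d + 1) ∣ t) (M : Fin t → Fin n → Bool)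
    (hrl : ∀ j : Fin n, RunLengthConstrained t d (fun i => M i j)) (j : Fin n) :
    (Finset.univ.filter (fun i : Fin t => M i j = true)).card ≤ t / (d + 1) := by
  have h := Finset.card_le_card_of_injOn
      (f := fun i : Fin t => (⟨i.val / (d + 1), Nat.div_lt_div_of_lt_of_dvd hdvd i.isLt⟩ :
        Fin (t / (d + 1))))
      (s := Finset.univ.filter (fun i : Fin t => M i j = true))
      (t := Finset.univ)
      (fun i _ => Finset.mem_univ _)
      (by
        intro a ha b hb heq
        simp only [Finset.mem_coe, Finset.mem_filter] at ha hb
        have hv : a.val / (d + 1) = b.val / (d + 1) := congrArg Fin.val heq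
        by_contra hne
        rcases lt_or_gt_of_ne hne with h | h
        · exact aux_div_ne (hrl j) h ha.2 hb.2 hv
        · exact aux_div_ne (hrl j) h hb.2 ha.2 hv.symm)
  simpa using h

/-- If `M` is `d`-runlength constrained and `x ↦ M ⊙ x` is injective on binary vectors
of weight exactly `k`, then `C(n,k) ≤ Σ_{i=0}^{⌊kt/(d+1)⌋} C(t,i)`. -/
theorem stmt10 (t n k d : ℕ) (hdvd : (d + 1) ∣ t) (M : Fin t → Fin n → Bool)
    (hrl : ∀ j : Fin n, RunLengthConstrained t d (fun i => M i j))
    (hinj : ∀ x x' : Fin n → Bool,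
      (Finset.univ.filter (fun j => x j = true)).card = k →
      (Finset.univ.filter (fun j => x' j = true)).card = k →
      orVec M x = orVec M x' → x = x') :
    Nat.choose n k ≤ ∑ i ∈ Finset.range (k * t / (d + 1) + 1), Nat.choose t i := by
  classical
  set R := k * t / (d + 1) with hR
  -- indicator function of a finset
  set ind : Finset (Fin n) → (Fin n → Bool) := fun S j => decide (j ∈ S) with hind
  have hindwt : ∀ S : Finset (Fin n),
      (Finset.univ.filter (fun j => ind S j = true)).card = S.card := by
    intro S
    congr 1
    ext j
    simp [hind]
  -- weight bound for orVec
  have hwt : ∀ x : Fin n → Bool,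
      (Finset.univ.filter (fun i : Fin t => orVec M x i = true)).card ≤
        (Finset.univ.filter (fun j => x j = true)).card * (t / (d + 1)) := by
    intro x
    have hsub : (Finset.univ.filter (fun i : Fin t => orVec M x i = true)) ⊆
        (Finset.univ.filter (fun j => x j = true)).biUnion
          (fun j => Finset.univ.filter (fun i : Fin t => M i j = true)) := by
      intro i hi
      simp only [Finset.mem_filter, orVec, decide_eq_true_eq] at hi
      obtain ⟨j, hj1, hj2⟩ := hi.2
      simp only [Finset.mem_biUnion, Finset.mem_filter]
      exact ⟨j, ⟨Finset.mem_univ _, hj1⟩, Finset.mem_univ _, hj2⟩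
    calc (Finset.univ.filter (fun i : Fin t => orVec M x i = true)).card
        ≤ _ := Finset.card_le_card hsub
      _ ≤ ∑ j ∈ Finset.univ.filter (fun j => x j = true),
            (Finset.univ.filter (fun i : Fin t => M i j = true)).card :=
          Finset.card_biUnion_le
      _ ≤ ∑ _j ∈ Finset.univ.filter (fun j => x j = true), (t / (d + 1)) :=
          Finset.sum_le_sum (fun j _ => aux_col_wt hdvd M hrl j)
      _ = _ := by rw [Finset.sum_const, smul_eq_mul]
  -- the map from k-subsets to supports of orVec
  set F : Finset (Fin n) → Finset (Fin t) :=
    fun S => Finset.univ.filter (fun i : Fin t => orVec M (ind S) i = true) with hF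
  set B : Finset (Finset (Fin t)) :=
    (Finset.range (R + 1)).biUnion
      (fun i => (Finset.univ : Finset (Fin t)).powersetCard i) with hB
  have hmain : ((Finset.univ : Finset (Fin n)).powersetCard k).card ≤ B.card := by
    apply Finset.card_le_card_of_injOn F
    · intro S hS
      simp only [Finset.mem_coe, Finset.mem_powersetCard_univ] at hS
      simp only [hB, Finset.mem_coe, Finset.mem_biUnion, Finset.mem_range, Finset.mem_powersetCard_univ]
      refine ⟨(F S).card, ?_, rfl⟩
      simp only [hF]
      have h1 := hwt (ind S)
      rw [hindwt, hS] at h1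
      have h2 : k * (t / (d + 1)) = R := by
        rw [hR, Nat.mul_div_assoc k hdvd]
      omega
    · intro S hS S' hS' heq
      simp only [Finset.mem_coe, Finset.mem_powersetCard_univ] at hS hS'
      have horv : orVec M (ind S) = orVec M (ind S') := by
        funext i
        have : (i ∈ F S) = (i ∈ F S') := by rw [heq]
        simp only [hF, Finset.mem_filter, Finset.mem_univ, true_and] at this
        rw [Bool.eq_iff_iff]
        constructor
        · intro h; exact this ▸ h
        · intro h; exact this.symm ▸ h
      have := hinj (ind S) (ind S') (by rw [hindwt, hS]) (by rw [hindwt, hS']) horv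
      ext j
      have := congrFun this j
      simpa [hind] using this
  have hA : ((Finset.univ : Finset (Fin n)).powersetCard k).card = Nat.choose n k := by
    simp [Finset.card_powersetCard]
  have hBcard : B.card ≤ ∑ i ∈ Finset.range (R + 1), Nat.choose t i := by
    calc B.card ≤ ∑ i ∈ Finset.range (R + 1),
        ((Finset.univ : Finset (Fin t)).powersetCard i).card := Finset.card_biUnion_le
      _ = _ := by
          apply Finset.sum_congr rfl
          intro i _
          simp [Finset.card_powersetCard]
  omega
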